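/- For all ordinals α and β, the tree on the disjoint union β ⊕ α consisting of all sequences of the form s⌢t, where s is a finite strictly decreasing sequence of ordinals less than β (tagged in the left summand) and t is a finite strictly decreasing sequence of ordinals less than α (tagged in the right summand), is a wellfounded tree whose rank is α + β. -/

import Mathlib

universe u v

/-- `T` is a tree on `X`: a set of finite sequences closed under initial segments. -/
def IsTree {X : Type u} (T : Set (List X)) : Prop :=
  ∀ s t : List X, s <+: t → t ∈ T → s ∈ T

/-- `T` is wellfounded: there is no infinite branch through `T`. -/
def IsWF {X : Type u} (T : Set (List X)) : Prop :=
  ¬ ∃ x : ℕ → X, ∀ n : ℕ, (List.ofFn fun i : Fin (n + 1) => x i) ∈ T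

/-- `ρ` is the canonical ranking of `T`: at each node `s ∈ T` it takes the value
`sup_{s⌢⟨x⟩ ∈ T} (ρ(s⌢⟨x⟩) + 1)`. -/
def IsCanonicalRank {X : Type u} (T : Set (List X)) (ρ : List X → Ordinal.{v}) : Prop :=
  ∀ s ∈ T, ρ s = ⨆ x : {x : X // s ++ [x] ∈ T}, (ρ (s ++ [x.1]) + 1)

/-- The tree on the disjoint union `β ⊕ α` of all sequences `s⌢t`, where `s` is a
finite strictly decreasing sequence of ordinals `< β` tagged in the left summand and
`t` is a finite strictly decreasing sequence of ordinals `< α` tagged in the right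
summand. -/
def SumDecTree (α β : Ordinal.{u}) : Set (List (Ordinal.{u} ⊕ Ordinal.{u})) :=
  {l | ∃ s t : List Ordinal.{u},
    l = s.map Sum.inl ++ t.map Sum.inr ∧
    (∀ o ∈ s, o < β) ∧ s.Chain' (· > ·) ∧
    (∀ o ∈ t, o < α) ∧ t.Chain' (· > ·)}

namespace SumAux

/-- The step relation: which extensions are allowed after a given last entry. -/
def step (α : Ordinal.{u}) : (Ordinal.{u} ⊕ Ordinal.{u}) → (Ordinal.{u} ⊕ Ordinal.{u}) → Prop
  | .inl o, .inl o' => o' < o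
  | .inl _, .inr o' => o' < α
  | .inr _, .inl _ => False
  | .inr o, .inr o' => o' < o

/-- Rank measure. -/
def m (α : Ordinal.{u}) : Ordinal.{u} ⊕ Ordinal.{u} → Ordinal.{u}
  | .inl o => α + o
  | .inr o => o

theorem m_lt_of_step (α : Ordinal.{u}) {x y : Ordinal.{u} ⊕ Ordinal.{u}}
    (h : step α x y) : m α y < m α x := by
  cases x with
  | inl o => cases y with
    | inl o' => simpa [m, step] using (add_lt_add_iff_left α).2 h
    | inr o' => exact lt_of_lt_of_le h le_self_add
  | inr o => cases y with
    | inl o' => exact absurd h (by simp [step])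
    | inr o' => exact h

theorem chain'_cons_iff {X : Type*} {R : X → X → Prop} {a : X} {l : List X} :
    List.Chain' R (a :: l) ↔ List.Chain R a l := Iff.rfl

theorem chain_gt_iff {b : Ordinal.{u}} {s : List Ordinal.{u}} :
    List.Chain (· > ·) b s ↔ (∀ o ∈ s, o < b) ∧ s.Chain' (· > ·) := by
  rw [List.Chain, List.Chain', List.isChain_iff_pairwise, List.pairwise_cons, ← List.isChain_iff_pairwise]

theorem chain_inr {α c : Ordinal.{u}} {l : List (Ordinal.{u} ⊕ Ordinal.{u})}
    (h : List.Chain (step α) (.inr c) l) :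
    ∃ t : List Ordinal.{u}, l = t.map Sum.inr ∧ List.Chain (· > ·) c t := by
  induction l generalizing c with
  | nil => exact ⟨[], rfl, List.Chain.nil⟩
  | cons x l ih =>
    rw [List.Chain, List.isChain_cons_cons] at h
    obtain ⟨h1, h2⟩ := h
    cases x with
    | inl o => exact absurd h1 (by simp [step])
    | inr o =>
      obtain ⟨t, rfl, ht⟩ := ih h2
      exact ⟨o :: t, rfl, List.Chain.cons h1 ht⟩

theorem chain_inl {α b : Ordinal.{u}} {l : List (Ordinal.{u} ⊕ Ordinal.{u})}
    (h : List.Chain (step α) (.inl b) l) :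
    ∃ s t : List Ordinal.{u}, l = s.map Sum.inl ++ t.map Sum.inr ∧
      List.Chain (· > ·) b s ∧ (∀ o ∈ t, o < α) ∧ t.Chain' (· > ·) := by
  induction l generalizing b with
  | nil => exact ⟨[], [], rfl, List.Chain.nil, by simp, List.isChain_nil⟩
  | cons x l ih =>
    rw [List.Chain, List.isChain_cons_cons] at h
    obtain ⟨h1, h2⟩ := h
    cases x with
    | inl o =>
      obtain ⟨s, t, rfl, hs, ht⟩ := ih h2
      exact ⟨o :: s, t, rfl, List.Chain.cons h1 hs, ht⟩
    | inr o =>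
      obtain ⟨t, rfl, ht⟩ := chain_inr h2
      have := chain_gt_iff.1 ht
      refine ⟨[], o :: t, rfl, List.Chain.nil, ?_, ?_⟩
      · intro o' ho'
        rcases List.mem_cons.1 ho' with rfl | ho'
        · exact h1
        · exact lt_trans (this.1 _ ho') h1
      · exact chain'_cons_iff.2 ht

theorem mem_iff_chain {α β : Ordinal.{u}} {l : List (Ordinal.{u} ⊕ Ordinal.{u})} :
    l ∈ SumDecTree α β ↔ List.Chain (step α) (.inl β) l := by
  constructor
  · rintro ⟨s, t, rfl, hsβ, hs, htα, ht⟩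
    rw [← chain'_cons_iff, show (Sum.inl β :: (s.map Sum.inl ++ t.map Sum.inr)) =
      (Sum.inl β :: s.map Sum.inl) ++ t.map Sum.inr by simp, List.Chain', List.isChain_append]
    refine ⟨?_, ?_, ?_⟩
    · rw [List.isChain_cons_map]
      exact chain_gt_iff.2 ⟨hsβ, hs⟩
    · rw [List.isChain_map]
      exact ht
    · intro x hx y hy
      -- x is the last of inl β :: s.map inl, so of the form inl _; y = inr (head of t)
      have hxl : ∃ o, x = Sum.inl o := by
        have hmem := List.mem_of_mem_getLast? hx
        rcases List.mem_cons.1 hmem with rfl | h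
        · exact ⟨β, rfl⟩
        · simp only [List.mem_map] at h
          obtain ⟨o, _, rfl⟩ := h
          exact ⟨o, rfl⟩
      obtain ⟨o, rfl⟩ := hxl
      have hyr : ∃ o', y = Sum.inr o' ∧ o' < α := by
        have := List.mem_of_mem_head? hy
        simp only [List.mem_map] at this
        obtain ⟨o', ho', rfl⟩ := this
        exact ⟨o', rfl, htα _ ho'⟩
      obtain ⟨o', rfl, ho'⟩ := hyr
      exact ho'
  · intro h
    obtain ⟨s, t, rfl, hs, htα, ht⟩ := chain_inl h
    have := chain_gt_iff.1 hs
    exact ⟨s, t, rfl, this.1, this.2, htα, ht⟩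

theorem append_mem_iff {α β : Ordinal.{u}} {l : List (Ordinal.{u} ⊕ Ordinal.{u})}
    (hl : l ∈ SumDecTree α β) (x : Ordinal.{u} ⊕ Ordinal.{u}) :
    l ++ [x] ∈ SumDecTree α β ↔
      step α ((Sum.inl β :: l).getLast (List.cons_ne_nil _ _)) x := by
  rw [mem_iff_chain, ← chain'_cons_iff, show (Sum.inl β :: (l ++ [x])) =
    (Sum.inl β :: l) ++ [x] by simp, List.Chain', List.isChain_append]
  rw [mem_iff_chain, ← chain'_cons_iff, List.Chain'] at hl
  simp only [hl, List.isChain_singleton, true_and, List.head?_cons, Option.mem_def,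
    Option.some.injEq, List.getLast?_eq_getLast (List.cons_ne_nil _ _)]
  constructor
  · intro h
    exact h _ rfl _ rfl
  · rintro h a rfl b rfl
    exact h

open Ordinal in
/-- The two supremum computations, packaged via `m`. -/
theorem sup_step (α β : Ordinal.{u}) (l : List (Ordinal.{u} ⊕ Ordinal.{u}))
    (hl : l ∈ SumDecTree α β) :
    m α ((Sum.inl β :: l).getLast (List.cons_ne_nil _ _)) =
      ⨆ x : {x : Ordinal.{u} ⊕ Ordinal.{u} // l ++ [x] ∈ SumDecTree α β},
        (m α x.1 + 1) := by
  obtain ⟨y, hy⟩ : ∃ y, (Sum.inl β :: l).getLast (List.cons_ne_nil _ _) = y := ⟨_, rfl⟩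
  rw [hy]
  have hiff : ∀ x, (l ++ [x] ∈ SumDecTree α β) ↔ step α y x :=
    fun x => hy ▸ append_mem_iff hl x
  have hrange : (Set.range fun x : {x // l ++ [x] ∈ SumDecTree α β} => m α x.1 + 1)
      = Set.range fun x : {x // step α y x} => m α x.1 + 1 := by
    ext v
    simp only [Set.mem_range, Subtype.exists]
    simp only [hiff]
  have hrw : (⨆ x : {x // l ++ [x] ∈ SumDecTree α β}, (m α x.1 + 1))
      = ⨆ x : {x // step α y x}, (m α x.1 + 1) := congrArg sSup hrange
  rw [hrw]
  -- now compute ⨆ x : {x // step α y x}, m α x + 1 = m α y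
  have hub : ∀ x : {x // step α y x}, m α x.1 + 1 ≤ m α y := fun x =>
    Order.succ_le_of_lt (m_lt_of_step α x.2)
  have hbdd : BddAbove (Set.range fun x : {x // step α y x} => m α x.1 + 1) :=
    ⟨m α y, by rintro _ ⟨x, rfl⟩; exact hub x⟩
  refine le_antisymm ?_ (csSup_le' (by rintro _ ⟨x, rfl⟩; exact hub x))
  by_contra hlt
  push_neg at hlt
  set S := ⨆ x : {x // step α y x}, (m α x.1 + 1) with hS
  cases y with
  | inr o =>
    have hSo : S < o := hlt
    have : m α (Sum.inr S) + 1 ≤ S := le_ciSup hbdd (⟨Sum.inr S, hSo⟩ : {x // step α (Sum.inr o) x})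
    exact absurd this (by simp [m, Order.succ_le_iff])
  | inl b =>
    rcases lt_or_ge S α with hSα | hαS
    · have : m α (Sum.inr S) + 1 ≤ S := le_ciSup hbdd (⟨Sum.inr S, hSα⟩ : {x // step α (Sum.inl b) x})
      exact absurd this (by simp [m, Order.succ_le_iff])
    · have hc : α + (S - α) = S := Ordinal.add_sub_cancel_of_le hαS
      have hcb : S - α < b := by
        have : α + (S - α) < α + b := by rw [hc]; exact hlt
        exact (add_lt_add_iff_left α).1 this
      have : m α (Sum.inl (S - α)) + 1 ≤ S :=
        le_ciSup hbdd (⟨Sum.inl (S - α), hcb⟩ : {x // step α (Sum.inl b) x})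
      rw [show m α (Sum.inl (S - α)) = S from hc] at this
      exact absurd this (by simp [Order.succ_le_iff])

end SumAux

open SumAux

/-- For all ordinals `α`, `β`: the tree of sequences consisting of a strictly
decreasing sequence of ordinals `< β` (tagged left) followed by a strictly
decreasing sequence of ordinals `< α` (tagged right) is a wellfounded tree of rank
`α + β`. -/
theorem sumDecTree_wellfounded_rank (α β : Ordinal.{u}) :
    IsTree (SumDecTree α β) ∧ IsWF (SumDecTree α β) ∧
    ∃ ρ : List (Ordinal.{u} ⊕ Ordinal.{u}) → Ordinal.{u},
      IsCanonicalRank (SumDecTree α β) ρ ∧ ρ [] = α + β := by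
  refine ⟨?_, ?_, ?_⟩
  · intro s t hst ht
    rw [mem_iff_chain, ← chain'_cons_iff] at ht ⊢
    obtain ⟨r, rfl⟩ := hst
    exact ht.prefix ⟨r, by simp⟩
  · rintro ⟨x, hx⟩
    have hstep : ∀ n, step α (x n) (x (n + 1)) := by
      intro n
      have h := (mem_iff_chain.1 (hx (n + 1)))
      rw [List.Chain, List.isChain_iff_getElem] at h
      have h2 := h (n + 1) (by simp)
      simpa only [List.getElem_cons_succ, List.getElem_ofFn, Fin.val_mk] using h2
    exact (RelEmbedding.natGT (fun n => m α (x n))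
      (fun n => m_lt_of_step α (hstep n))).not_wellFounded
      Ordinal.lt_wf
  · refine ⟨fun l => m α ((Sum.inl β :: l).getLast (List.cons_ne_nil _ _)), ?_, by simp [m]⟩
    intro s hs
    dsimp only
    rw [sup_step α β s hs]
    congr 1
    funext x
    rw [show (Sum.inl β :: (s ++ [x.1])).getLast (List.cons_ne_nil _ _) = x.1 from
      List.getLast_concat (l := Sum.inl β :: s) (a := x.1)]
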